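/- Let q be a positive integer and let J, K ⊆ {0,1,…,2^q−1} with |J| = |K| = 2. Then H_{J,K,2^q} is a Hadamard submatrix of the Fourier matrix F_{2^q} if and only if there exist α, β ∈ ℕ₀ with α + β = q − 1 such that P_{2^q}(J) = {1, 2^{q−α}} and P_{2^q}(K) = {1, 2^{q−β}}. -/

import Mathlib

open Finset

/-- The difference set `D(X) = {x₁ - x₂ : x₁, x₂ ∈ X}` of a finite set of naturals. -/
def diffSet (X : Finset ℕ) : Finset ℤ :=
  (X ×ˢ X).image fun q => (q.1 : ℤ) - (q.2 : ℤ)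

/-- The `m`-th primitive set `P_m(X) = {m / gcd(m,d) : d ∈ D(X)}`. -/
def primSet (m : ℕ) (X : Finset ℕ) : Finset ℕ :=
  (diffSet X).image fun d => m / Nat.gcd m d.natAbs

/-- `H_{J,K,m}` is a Hadamard submatrix of the Fourier matrix `F_m`:
for all distinct `j₁ j₂ ∈ J`, `∑_{k ∈ K} e^{2πi(j₁-j₂)k/m} = 0`. -/
def IsHadamardSub (m : ℕ) (J K : Finset ℕ) : Prop :=
  ∀ j₁ ∈ J, ∀ j₂ ∈ J, j₁ ≠ j₂ →
    ∑ k ∈ K, Complex.exp (2 * Real.pi * Complex.I * ((j₁ : ℂ) - (j₂ : ℂ)) * (k : ℂ) / (m : ℂ)) = 0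

/-- `ν_p^max` of a finite set of naturals. -/
noncomputable def nuMaxN (p : ℕ) (S : Finset ℕ) : ℕ := S.sup fun n => padicValNat p n

/-- `ν_p^min` of a finite set of naturals (0 for the empty set). -/
noncomputable def nuMinN (p : ℕ) (S : Finset ℕ) : ℕ :=
  if h : S.Nonempty then S.inf' h fun n => padicValNat p n else 0

/-- `ν_p^max` of a finite set of integers. -/
noncomputable def nuMaxI (p : ℕ) (S : Finset ℤ) : ℕ := S.sup fun d => padicValInt p d

/-- `ν_p^min` of a finite set of integers (0 for the empty set). -/
noncomputable def nuMinI (p : ℕ) (S : Finset ℤ) : ℕ :=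
  if h : S.Nonempty then S.inf' h fun d => padicValInt p d else 0

/-- `C_m(X) = ∏_{s ∈ P_m(X) \ {1}} Φ_s(1)`. -/
noncomputable def Cm (m : ℕ) (X : Finset ℕ) : ℤ :=
  ∏ s ∈ (primSet m X).erase 1, (Polynomial.cyclotomic s ℤ).eval 1

lemma oddExists_neg {x M : ℤ} (h : ∃ n : ℤ, x = (2*n+1)*M) : ∃ n : ℤ, -x = (2*n+1)*M := by
  obtain ⟨n, hn⟩ := h
  exact ⟨-n-1, by rw [hn]; ring⟩

lemma padic_lt {q t : ℕ} (ht : t ≠ 0) (hlt : t < 2^q) : padicValNat 2 t < q := by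
  have h1 : 2 ^ padicValNat 2 t ≤ t := Nat.le_of_dvd (Nat.pos_of_ne_zero ht) pow_padicValNat_dvd
  exact (Nat.pow_lt_pow_iff_right one_lt_two).mp (lt_of_le_of_lt h1 hlt)

lemma gcd_two_pow {q t : ℕ} (ht : t ≠ 0) (hlt : t < 2^q) :
    Nat.gcd (2^q) t = 2 ^ padicValNat 2 t := by
  set v := padicValNat 2 t with hv
  have hvq : v < q := padic_lt ht hlt
  have hfac : t.factorization 2 = v := Nat.factorization_def t Nat.prime_two
  have hts : 2 ^ v * (t / 2 ^ v) = t := by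
    conv_lhs => rw [← hfac]
    exact Nat.ordProj_mul_ordCompl_eq_self t 2
  have hodd : ¬ 2 ∣ (t / 2 ^ v) := by
    have := Nat.not_dvd_ordCompl Nat.prime_two ht
    rwa [hfac] at this
  have hcop : Nat.Coprime (2 ^ (q - v)) (t / 2 ^ v) :=
    Nat.Coprime.pow_left _ ((Nat.prime_two.coprime_iff_not_dvd).mpr hodd)
  calc Nat.gcd (2^q) t = Nat.gcd (2^v * 2^(q-v)) (2^v * (t / 2^v)) := by
        rw [← pow_add, Nat.add_sub_cancel' hvq.le, hts]
    _ = 2^v * Nat.gcd (2^(q-v)) (t / 2^v) := Nat.gcd_mul_left _ _ _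
    _ = 2^v := by rw [hcop, mul_one]

lemma diffSet_pair (a b : ℕ) : diffSet {a, b} = {0, (a:ℤ) - b, (b:ℤ) - a} := by
  ext x
  simp only [diffSet, mem_image, mem_product, mem_insert, mem_singleton, Prod.exists]
  constructor
  · rintro ⟨p, r, ⟨hp | hp, hr | hr⟩, rfl⟩ <;> subst hp <;> subst hr <;> simp
  · rintro (rfl | rfl | rfl)
    · exact ⟨a, a, ⟨Or.inl rfl, Or.inl rfl⟩, by ring⟩
    · exact ⟨a, b, ⟨Or.inl rfl, Or.inr rfl⟩, rfl⟩
    · exact ⟨b, a, ⟨Or.inr rfl, Or.inl rfl⟩, rfl⟩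

lemma primSet_pair (m a b : ℕ) (hm : m ≠ 0) :
    primSet m {a, b} = {1, m / Nat.gcd m ((a:ℤ) - b).natAbs} := by
  rw [primSet, diffSet_pair]
  have h1 : ((b:ℤ) - a).natAbs = ((a:ℤ) - b).natAbs := by
    rw [← Int.natAbs_neg]; ring_nf
  simp [Finset.image_insert, Finset.image_singleton, Int.natAbs_zero, Nat.gcd_zero_right,
    Nat.div_self (Nat.pos_of_ne_zero hm), h1]

lemma primSet_pair_pow {q a b : ℕ} (hab : a ≠ b) (hlt : ((a:ℤ) - b).natAbs < 2^q) :
    primSet (2^q) {a, b} = {1, 2 ^ (q - padicValNat 2 ((a:ℤ) - b).natAbs)} := by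
  have hd0 : ((a:ℤ) - b).natAbs ≠ 0 := by
    simp only [ne_eq, Int.natAbs_eq_zero, sub_eq_zero]
    exact_mod_cast hab
  rw [primSet_pair _ _ _ (by positivity), gcd_two_pow hd0 hlt,
    Nat.pow_div (padic_lt hd0 hlt).le two_pos]

lemma oddpart {q : ℕ} (hq : 0 < q) {d f : ℤ} (hd : d ≠ 0) (hf : f ≠ 0) :
    (∃ n : ℤ, 2*d*f = (2*n+1)*2^q) ↔
      padicValNat 2 d.natAbs + padicValNat 2 f.natAbs = q - 1 := by
  have hD : d.natAbs ≠ 0 := Int.natAbs_ne_zero.mpr hd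
  have hF : f.natAbs ≠ 0 := Int.natAbs_ne_zero.mpr hf
  constructor
  · rintro ⟨n, hn⟩
    have habs : 2 * d.natAbs * f.natAbs = (2*n+1).natAbs * 2^q := by
      have := congrArg Int.natAbs hn
      simpa [Int.natAbs_mul, Int.natAbs_pow, mul_assoc] using this
    have hodd : ¬ (2:ℕ) ∣ (2*n+1).natAbs := by
      intro h
      have := Int.natAbs_dvd_natAbs.mp (show (2:ℤ).natAbs ∣ (2*n+1).natAbs from h)
      omega
    have h1 : padicValNat 2 (2 * d.natAbs * f.natAbs) = 1 + padicValNat 2 d.natAbs + padicValNat 2 f.natAbs := by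
      rw [padicValNat.mul (by omega) hF, padicValNat.mul (by omega) hD, padicValNat.self one_lt_two]
    have h2 : padicValNat 2 ((2*n+1).natAbs * 2^q) = q := by
      rw [padicValNat.mul (by omega) (by positivity), padicValNat.eq_zero_of_not_dvd hodd,
        padicValNat.prime_pow]
      omega
    rw [habs, h2] at h1
    omega
  · intro hab
    set a := padicValNat 2 d.natAbs with ha
    set b := padicValNat 2 f.natAbs with hb
    have hda : (2:ℕ)^a * (d.natAbs / 2^a) = d.natAbs := by
      conv_lhs => rw [ha, ← Nat.factorization_def d.natAbs Nat.prime_two]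
      exact Nat.ordProj_mul_ordCompl_eq_self _ 2
    have hfb : (2:ℕ)^b * (f.natAbs / 2^b) = f.natAbs := by
      conv_lhs => rw [hb, ← Nat.factorization_def f.natAbs Nat.prime_two]
      exact Nat.ordProj_mul_ordCompl_eq_self _ 2
    have hoddd : ¬ 2 ∣ (d.natAbs / 2^a) := by
      have := Nat.not_dvd_ordCompl Nat.prime_two hD
      rwa [Nat.factorization_def d.natAbs Nat.prime_two] at this
    have hoddf : ¬ 2 ∣ (f.natAbs / 2^b) := by
      have := Nat.not_dvd_ordCompl Nat.prime_two hF
      rwa [Nat.factorization_def f.natAbs Nat.prime_two] at this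
    set w := (d.natAbs / 2^a) * (f.natAbs / 2^b) with hw
    have hwodd : ¬ 2 ∣ w := by
      intro h
      rcases (Nat.prime_two.dvd_mul).mp h with h | h
      exacts [hoddd h, hoddf h]
    have hkey : 2 * d.natAbs * f.natAbs = w * 2^q := by
      have : 2 * (2^a * (d.natAbs / 2^a)) * (2^b * (f.natAbs / 2^b)) = w * 2^q := by
        have hq1 : 1 + a + b = q := by omega
        rw [hw, ← hq1]; ring
      rwa [hda, hfb] at this
    have hodd2 : ∃ n : ℤ, (w:ℤ) = 2*n+1 := by
      have := Nat.odd_iff.mpr (by omega : w % 2 = 1)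
      obtain ⟨k, hk⟩ := this
      exact ⟨(k:ℤ), by push_cast [hk]; ring⟩
    obtain ⟨n, hn⟩ := hodd2
    have habs2 : (2*d*f).natAbs = w * 2^q := by
      rw [Int.natAbs_mul, Int.natAbs_mul, ← hkey]; rfl
    rcases Int.natAbs_eq (2*d*f) with h | h
    · exact ⟨n, by rw [h, habs2]; push_cast [← hn]; ring⟩
    · have h' : ∃ m : ℤ, -(2*d*f) = (2*m+1)*2^q :=
        ⟨n, by rw [h, habs2]; push_cast [← hn]; ring⟩
      simpa using oddExists_neg h'

lemma exp_pair {m : ℕ} (hm : 0 < m) (d : ℤ) (c e : ℕ) :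
    Complex.exp (2 * Real.pi * Complex.I * (d:ℂ) * (c:ℂ) / (m:ℂ)) +
      Complex.exp (2 * Real.pi * Complex.I * (d:ℂ) * (e:ℂ) / (m:ℂ)) = 0 ↔
      ∃ n : ℤ, 2 * d * ((e:ℤ) - c) = (2*n+1) * m := by
  have hm' : (m:ℂ) ≠ 0 := Nat.cast_ne_zero.mpr hm.ne'
  have hπ : (Real.pi:ℂ) ≠ 0 := Complex.ofReal_ne_zero.mpr Real.pi_ne_zero
  have hI := Complex.I_ne_zero
  set X : ℂ := 2 * Real.pi * Complex.I * (d:ℂ) * (c:ℂ) / (m:ℂ) with hXdef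
  set Y : ℂ := 2 * Real.pi * Complex.I * (d:ℂ) * (e:ℂ) / (m:ℂ) with hYdef
  have step1 : Complex.exp X + Complex.exp Y = 0 ↔ Complex.exp (Y - X) = -1 := by
    rw [Complex.exp_sub, div_eq_iff (Complex.exp_ne_zero _)]
    constructor <;> intro h <;> linear_combination h
  have step2 : Complex.exp (Y - X) = -1 ↔ Complex.exp (Y - X + Real.pi * Complex.I) = 1 := by
    rw [Complex.exp_add, Complex.exp_pi_mul_I]
    constructor <;> intro h <;> linear_combination -h
  rw [step1, step2, Complex.exp_eq_one_iff]
  constructor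
  · rintro ⟨n, hn⟩
    refine ⟨n - 1, ?_⟩
    rw [hXdef, hYdef] at hn
    field_simp at hn
    have hC : (2*Real.pi*Complex.I) * ((2 * d * ((e:ℤ) - c) : ℤ) : ℂ) =
        (2*Real.pi*Complex.I) * (((2*(n-1)+1) * m : ℤ) : ℂ) := by
      push_cast
      linear_combination (2 * Real.pi * Complex.I) * hn
    have := mul_left_cancel₀ (by simp [hπ, hI] : (2*Real.pi*Complex.I : ℂ) ≠ 0) hC
    exact_mod_cast this
  · rintro ⟨n, hn⟩
    refine ⟨n + 1, ?_⟩
    have hC : ((2 * d * ((e:ℤ) - c) : ℤ) : ℂ) = (((2*n+1) * m : ℤ) : ℂ) := by exact_mod_cast hn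
    push_cast at hC
    rw [hXdef, hYdef]
    field_simp
    push_cast
    linear_combination hC

lemma sum_pair_eq_zero {q : ℕ} (j₁ j₂ c e : ℕ) (hce : c ≠ e)
    (h : ∃ n : ℤ, 2*((j₁:ℤ)-j₂)*((c:ℤ)-e) = (2*n+1)*2^q) :
    ∑ k ∈ ({c, e} : Finset ℕ),
      Complex.exp (2 * Real.pi * Complex.I * ((j₁:ℂ) - (j₂:ℂ)) * (k:ℂ) / ((2^q : ℕ):ℂ)) = 0 := by
  rw [Finset.sum_pair hce]
  have h' : ∃ n : ℤ, 2*((j₁:ℤ)-j₂)*((e:ℤ)-c) = (2*n+1)*((2^q : ℕ):ℤ) := by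
    obtain ⟨n, hn⟩ := h
    refine ⟨-n-1, ?_⟩
    push_cast
    linear_combination -hn
  have := (exp_pair (show 0 < 2^q by positivity) ((j₁:ℤ)-j₂) c e).mpr h'
  convert this using 3 <;> push_cast <;> ring

lemma sum_pair_eq_zero' {q : ℕ} (j₁ j₂ c e : ℕ) (hce : c ≠ e)
    (h : ∑ k ∈ ({c, e} : Finset ℕ),
      Complex.exp (2 * Real.pi * Complex.I * ((j₁:ℂ) - (j₂:ℂ)) * (k:ℂ) / ((2^q : ℕ):ℂ)) = 0) :
    ∃ n : ℤ, 2*((j₁:ℤ)-j₂)*((c:ℤ)-e) = (2*n+1)*2^q := by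
  rw [Finset.sum_pair hce] at h
  have h2 : Complex.exp (2 * Real.pi * Complex.I * (((j₁:ℤ)-j₂ : ℤ):ℂ) * (c:ℂ) / ((2^q : ℕ):ℂ)) +
      Complex.exp (2 * Real.pi * Complex.I * (((j₁:ℤ)-j₂ : ℤ):ℂ) * (e:ℂ) / ((2^q : ℕ):ℂ)) = 0 := by
    convert h using 3 <;> push_cast <;> ring
  obtain ⟨n, hn⟩ := (exp_pair (show 0 < 2^q by positivity) ((j₁:ℤ)-j₂) c e).mp h2
  push_cast at hn
  exact ⟨-n-1, by linear_combination -hn⟩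

theorem hadamard_two_pow_iff (q : ℕ) (hq : 0 < q) (J K : Finset ℕ)
    (hJ : J ⊆ Finset.range (2 ^ q)) (hK : K ⊆ Finset.range (2 ^ q))
    (hJ2 : J.card = 2) (hK2 : K.card = 2) :
    IsHadamardSub (2 ^ q) J K ↔
      ∃ α β : ℕ, α + β = q - 1 ∧
        primSet (2 ^ q) J = {1, 2 ^ (q - α)} ∧ primSet (2 ^ q) K = {1, 2 ^ (q - β)} := by
  obtain ⟨a, b, hab, rfl⟩ := Finset.card_eq_two.mp hJ2
  obtain ⟨c, e, hce, rfl⟩ := Finset.card_eq_two.mp hK2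
  have ha : a < 2^q := mem_range.mp (hJ (mem_insert_self _ _))
  have hb : b < 2^q := mem_range.mp (hJ (mem_insert_of_mem (mem_singleton_self _)))
  have hc : c < 2^q := mem_range.mp (hK (mem_insert_self _ _))
  have he : e < 2^q := mem_range.mp (hK (mem_insert_of_mem (mem_singleton_self _)))
  have hd0 : ((a:ℤ) - b) ≠ 0 := sub_ne_zero.mpr (by exact_mod_cast hab)
  have hf0 : ((c:ℤ) - e) ≠ 0 := sub_ne_zero.mpr (by exact_mod_cast hce)
  have hdlt : ((a:ℤ) - b).natAbs < 2^q := by omega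
  have hflt : ((c:ℤ) - e).natAbs < 2^q := by omega
  have hdn0 : ((a:ℤ) - b).natAbs ≠ 0 := Int.natAbs_ne_zero.mpr hd0
  have hfn0 : ((c:ℤ) - e).natAbs ≠ 0 := Int.natAbs_ne_zero.mpr hf0
  have key : IsHadamardSub (2^q) {a, b} {c, e} ↔
      ∃ n : ℤ, 2*((a:ℤ)-b)*((c:ℤ)-e) = (2*n+1)*2^q := by
    constructor
    · intro h
      exact sum_pair_eq_zero' a b c e hce
        (h a (mem_insert_self _ _) b (mem_insert_of_mem (mem_singleton_self _)) hab)
    · rintro ⟨n, hn⟩ j₁ hj₁ j₂ hj₂ hne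
      simp only [mem_insert, mem_singleton] at hj₁ hj₂
      rcases hj₁ with rfl | rfl <;> rcases hj₂ with rfl | rfl
      · exact absurd rfl hne
      · exact sum_pair_eq_zero _ _ c e hce ⟨n, hn⟩
      · exact sum_pair_eq_zero _ _ c e hce ⟨-n-1, by linear_combination -hn⟩
      · exact absurd rfl hne
  rw [key, oddpart hq hd0 hf0]
  constructor
  · intro hsum
    exact ⟨padicValNat 2 ((a:ℤ) - b).natAbs, padicValNat 2 ((c:ℤ) - e).natAbs, hsum,
      primSet_pair_pow hab hdlt, primSet_pair_pow hce hflt⟩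
  · rintro ⟨α, β, hsum, hPJ, hPK⟩
    have hvd : padicValNat 2 ((a:ℤ) - b).natAbs = α := by
      have h1 := primSet_pair_pow hab hdlt
      rw [hPJ] at h1
      have hmem : (2:ℕ)^(q - padicValNat 2 ((a:ℤ) - b).natAbs) ∈
          ({1, 2^(q-α)} : Finset ℕ) := by rw [h1]; simp
      have hvlt := padic_lt hdn0 hdlt
      rcases mem_insert.mp hmem with h | h
      · have : q - padicValNat 2 ((a:ℤ) - b).natAbs = 0 :=
          Nat.pow_right_injective (le_refl 2) (h.trans (pow_zero 2).symm)
        omega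
      · rw [mem_singleton] at h
        have := Nat.pow_right_injective (le_refl 2) h
        omega
    have hvf : padicValNat 2 ((c:ℤ) - e).natAbs = β := by
      have h1 := primSet_pair_pow hce hflt
      rw [hPK] at h1
      have hmem : (2:ℕ)^(q - padicValNat 2 ((c:ℤ) - e).natAbs) ∈
          ({1, 2^(q-β)} : Finset ℕ) := by rw [h1]; simp
      have hvlt := padic_lt hfn0 hflt
      rcases mem_insert.mp hmem with h | h
      · have : q - padicValNat 2 ((c:ℤ) - e).natAbs = 0 :=
          Nat.pow_right_injective (le_refl 2) (h.trans (pow_zero 2).symm)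
        omega
      · rw [mem_singleton] at h
        have := Nat.pow_right_injective (le_refl 2) h
        omega
    omega
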